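/- Suppose f : [0,T] → ℝ satisfies df_t/dt = -λf_t - ∑_{i=1}^n l'(f_t(x_i), y_i)·Θ̂_t(x,x_i), and sign(l'(f_t(x_i),y_i)) = sign(l'(f_0(x_i),y_i)) for all t ∈ [0,T]. Then f_T(x) = ∑_i a_i K(x,x_i) + b, with a_i = -sign(l'(f_0(x_i),y_i)), b = e^{-λT}f_0(x), and K(x,x_i) = e^{-λT}∫_0^T |l'(f_t(x_i),y_i)|·Θ̂_t(x,x_i)·e^{λt} dt. -/

import Mathlib

private lemma my_sign_mul_abs (r : ℝ) : Real.sign r * |r| = r := by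
  rcases lt_trichotomy r 0 with h|h|h
  · rw [Real.sign_of_neg h, abs_of_neg h]; ring
  · simp [h]
  · rw [Real.sign_of_pos h, abs_of_pos h]; ring


/-- Every model trained by gradient flow on an `ℓ₂` regularized loss is a
kernel machine: `f_T(x) = ∑ᵢ aᵢ K(x, xᵢ) + b` with
`aᵢ = -sign(l'(f₀(xᵢ), yᵢ))`, `b = e^{-λT} f₀(x)` and
`K(x, xᵢ) = e^{-λT} ∫₀ᵀ |l'(f_t(xᵢ), yᵢ)| Θ̂_t(x, xᵢ) e^{λt} dt`. -/
theorem nn_is_kernel_machine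
    {X : Type*} (n : ℕ) (xs : Fin n → X) (ys : Fin n → ℝ)
    (lam T : ℝ) (hT : 0 ≤ T)
    (F : ℝ → X → ℝ) (l' : ℝ → ℝ → ℝ) (Θ : ℝ → X → X → ℝ)
    (hcont : ∀ x, Continuous (fun t =>
      ∑ i, l' (F t (xs i)) (ys i) * Θ t x (xs i)))
    (habs_cont : ∀ x i, Continuous (fun t =>
      |l' (F t (xs i)) (ys i)| * Θ t x (xs i)))
    (hdyn : ∀ (t : ℝ) (x : X), HasDerivAt (fun s => F s x)
      (-(lam * F t x) - ∑ i, l' (F t (xs i)) (ys i) * Θ t x (xs i)) t)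
    (hsign : ∀ t ∈ Set.Icc (0:ℝ) T, ∀ i,
      Real.sign (l' (F t (xs i)) (ys i)) = Real.sign (l' (F 0 (xs i)) (ys i))) :
    ∀ x : X,
      F T x = (∑ i, (-(Real.sign (l' (F 0 (xs i)) (ys i)))) *
          (Real.exp (-(lam * T)) *
            ∫ t in (0:ℝ)..T,
              |l' (F t (xs i)) (ys i)| * Θ t x (xs i) * Real.exp (lam * t)))
        + Real.exp (-(lam * T)) * F 0 x := by
  intro x
  set S : ℝ → ℝ := fun t => ∑ i, l' (F t (xs i)) (ys i) * Θ t x (xs i) with hS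
  set s : Fin n → ℝ := fun i => Real.sign (l' (F 0 (xs i)) (ys i)) with hs
  set I : Fin n → ℝ := fun i =>
    ∫ t in (0:ℝ)..T, |l' (F t (xs i)) (ys i)| * Θ t x (xs i) * Real.exp (lam * t) with hI
  have hderiv : ∀ t : ℝ, HasDerivAt (fun u => Real.exp (lam*u) * F u x)
      (Real.exp (lam*t) * (- S t)) t := by
    intro t
    have h1 : HasDerivAt (fun u : ℝ => Real.exp (lam*u)) (Real.exp (lam*t) * lam) t := by
      have := (Real.hasDerivAt_exp (lam*t)).comp t ((hasDerivAt_id t).const_mul lam)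
      simpa [mul_comm, Function.comp_def] using this
    have h2 := h1.mul (hdyn t x)
    refine h2.congr_deriv ?_
    simp only [hS]
    ring
  have hScont : Continuous fun t => Real.exp (lam*t) * (- S t) :=
    (Real.continuous_exp.comp (continuous_const.mul continuous_id)).mul (hcont x).neg
  have hftc : ∫ t in (0:ℝ)..T, Real.exp (lam*t) * (- S t)
      = Real.exp (lam*T) * F T x - Real.exp (lam*0) * F 0 x :=
    intervalIntegral.integral_eq_sub_of_hasDerivAt (fun t _ => hderiv t)
      (hScont.intervalIntegrable 0 T)
  have hsplit : ∫ t in (0:ℝ)..T, Real.exp (lam*t) * (- S t)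
      = ∑ i, (-(s i)) * I i := by
    have hstep : ∫ t in (0:ℝ)..T, Real.exp (lam*t) * (- S t)
        = ∫ t in (0:ℝ)..T, ∑ i,
            -(s i * (|l' (F t (xs i)) (ys i)| * Θ t x (xs i) * Real.exp (lam*t))) := by
      apply intervalIntegral.integral_congr
      intro t ht
      rw [Set.uIcc_of_le hT] at ht
      simp only [hS, Finset.mul_sum, neg_mul, mul_neg, ← Finset.sum_neg_distrib]
      refine Finset.sum_congr rfl fun i _ => ?_
      have habs : l' (F t (xs i)) (ys i) = s i * |l' (F t (xs i)) (ys i)| := by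
        rw [hs]; dsimp only
        rw [← hsign t ht i, my_sign_mul_abs]
      conv_lhs => rw [habs]
      ring
    rw [hstep, intervalIntegral.integral_finset_sum]
    · refine Finset.sum_congr rfl fun i _ => ?_
      rw [intervalIntegral.integral_neg, intervalIntegral.integral_const_mul, hI]
      ring
    · intro i _
      exact (continuous_const.mul ((habs_cont x i).mul
        (Real.continuous_exp.comp (continuous_const.mul continuous_id)))).neg.intervalIntegrable 0 T
  have key : ∑ i, (-(s i)) * I i = Real.exp (lam*T) * F T x - F 0 x := by
    rw [← hsplit, hftc, mul_zero, Real.exp_zero, one_mul]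
  have hE : Real.exp (-(lam*T)) * Real.exp (lam*T) = 1 := by
    rw [← Real.exp_add]; simp
  calc F T x = Real.exp (-(lam*T)) * (Real.exp (lam*T) * F T x) := by
        rw [← mul_assoc, hE, one_mul]
    _ = Real.exp (-(lam*T)) * ((∑ i, (-(s i)) * I i) + F 0 x) := by
        rw [key]; ring
    _ = (∑ i, (-(s i)) * (Real.exp (-(lam*T)) * I i)) + Real.exp (-(lam*T)) * F 0 x := by
        rw [mul_add, Finset.mul_sum]
        congr 1
        exact Finset.sum_congr rfl fun i _ => by ring
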